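/- Suppose u, v, w are C³ functions of (x,y,z,t) and q is a C² function satisfying the nonlinear covering system q_t = (v_x - q) q_x - w_x q_y + u_x and q_z = -v_y q_x + (w_y + q) q_y - u_y. If moreover the compatibility q_{tz} = q_{zt} holds identically in the second jet of q (i.e. after substituting the two covering equations and their consequences), then u, v, w satisfy the three-component system: u_{xz} + u_{ty} + v_y u_{xx} - (v_x + w_y) u_{xy} + w_x u_{yy} = 0, v_{xz} + v_{ty} + v_y v_{xx} - (v_x + w_y) v_{xy} + w_x v_{yy} + u_y = 0, w_{xz} + w_{ty} + v_y w_{xx} - (v_x + w_y) w_{xy} + w_x w_{yy} + u_x = 0; conversely if u, v, w satisfy the three-component system then the covering system is compatible for generic q. -/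
import Mathlib


/-- Partial derivative on `ℝ⁴` with coordinates `(x,y,z,t) = (0,1,2,3)`. -/
noncomputable def pd (i : Fin 4) (f : (Fin 4 → ℝ) → ℝ) (p : Fin 4 → ℝ) : ℝ :=
  fderiv ℝ f p (Pi.single i 1)

/-- Second partial derivative `f_{ij}`. -/
noncomputable def pdd (i j : Fin 4) (f : (Fin 4 → ℝ) → ℝ) : (Fin 4 → ℝ) → ℝ :=
  pd i (pd j f)

/-- Formal expression for `q_{tz}` obtained by differentiating the first covering
equation `q_t = (v_x - q) q_x - w_x q_y + u_x` with respect to `z` and substituting the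
covering equations; `(q, qx, qy, qxx, qxy, qyy)` are free second-jet variables of `q`. -/
noncomputable def Etz (u v w : (Fin 4 → ℝ) → ℝ) (p : Fin 4 → ℝ)
    (q qx qy qxx qxy qyy : ℝ) : ℝ :=
  (pdd 0 2 v p - (-(pd 1 v p) * qx + (pd 1 w p + q) * qy - pd 1 u p)) * qx
  + (pd 0 v p - q) *
      (-(pdd 0 1 v p) * qx - pd 1 v p * qxx + (pdd 0 1 w p + qx) * qy
        + (pd 1 w p + q) * qxy - pdd 0 1 u p)
  - pdd 0 2 w p * qy
  - pd 0 w p *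
      (-(pdd 1 1 v p) * qx - pd 1 v p * qxy + (pdd 1 1 w p + qy) * qy
        + (pd 1 w p + q) * qyy - pdd 1 1 u p)
  + pdd 0 2 u p

/-- Formal expression for `q_{zt}` obtained by differentiating the second covering
equation `q_z = -v_y q_x + (w_y + q) q_y - u_y` with respect to `t` and substituting
the covering equations. -/
noncomputable def Ezt (u v w : (Fin 4 → ℝ) → ℝ) (p : Fin 4 → ℝ)
    (q qx qy qxx qxy qyy : ℝ) : ℝ :=
  -(pdd 1 3 v p) * qx
  - pd 1 v p *
      ((pdd 0 0 v p - qx) * qx + (pd 0 v p - q) * qxx - pdd 0 0 w p * qy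
        - pd 0 w p * qxy + pdd 0 0 u p)
  + (pdd 1 3 w p + ((pd 0 v p - q) * qx - pd 0 w p * qy + pd 0 u p)) * qy
  + (pd 1 w p + q) *
      ((pdd 0 1 v p - qy) * qx + (pd 0 v p - q) * qxy - pdd 0 1 w p * qy
        - pd 0 w p * qyy + pdd 0 1 u p)
  - pdd 1 3 u p

/-- The covering system `q_t = (v_x - q)q_x - w_x q_y + u_x`,
`q_z = -v_y q_x + (w_y + q)q_y - u_y` is compatible identically in the second jet of `q`
(i.e. `q_{tz} = q_{zt}` as polynomials in the free jet variables) if and only if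
`(u,v,w)` satisfy the three-component generalization of the second heavenly equation. -/
lemma pdd_symm (f : (Fin 4 → ℝ) → ℝ) (hf : ContDiff ℝ 3 f) (i j : Fin 4) (p : Fin 4 → ℝ) :
    pdd i j f p = pdd j i f p := by
  have hd : DifferentiableAt ℝ (fderiv ℝ f) p :=
    ((hf.fderiv_right (m := 2) (by norm_num)).differentiable (by norm_num)) p
  have key : ∀ v w : Fin 4 → ℝ,
      fderiv ℝ (fun x => fderiv ℝ f x w) p v = fderiv ℝ (fderiv ℝ f) p v w := by
    intro v w
    have : fderiv ℝ (fun x => (fderiv ℝ f x) ((fun _ : Fin 4 → ℝ => w) x)) p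
        = (fderiv ℝ f p).comp (fderiv ℝ (fun _ : Fin 4 → ℝ => w) p)
          + (fderiv ℝ (fderiv ℝ f) p).flip w :=
      fderiv_clm_apply hd (differentiableAt_const w)
    simp only [fderiv_const] at this
    simp [this]
  have hsymm : IsSymmSndFDerivAt ℝ f p :=
    (hf.contDiffAt).isSymmSndFDerivAt (by norm_num)
  have e : ∀ k l : Fin 4, pdd k l f p
      = fderiv ℝ (fderiv ℝ f) p (Pi.single k 1) (Pi.single l 1) := by
    intro k l
    have hrfl : pd l f = fun x => fderiv ℝ f x (Pi.single l 1) := rfl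
    rw [pdd, pd, hrfl, key]
  rw [e, e]
  exact hsymm (Pi.single i 1) (Pi.single j 1)

theorem three_component_second_heavenly (u v w : (Fin 4 → ℝ) → ℝ)
    (hu : ContDiff ℝ 3 u) (hv : ContDiff ℝ 3 v) (hw : ContDiff ℝ 3 w) :
    (∀ p : Fin 4 → ℝ, ∀ q qx qy qxx qxy qyy : ℝ,
        Etz u v w p q qx qy qxx qxy qyy = Ezt u v w p q qx qy qxx qxy qyy)
    ↔ (∀ p : Fin 4 → ℝ,
        pdd 0 2 u p + pdd 3 1 u p + pd 1 v p * pdd 0 0 u p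
          - (pd 0 v p + pd 1 w p) * pdd 0 1 u p + pd 0 w p * pdd 1 1 u p = 0 ∧
        pdd 0 2 v p + pdd 3 1 v p + pd 1 v p * pdd 0 0 v p
          - (pd 0 v p + pd 1 w p) * pdd 0 1 v p + pd 0 w p * pdd 1 1 v p + pd 1 u p = 0 ∧
        pdd 0 2 w p + pdd 3 1 w p + pd 1 v p * pdd 0 0 w p
          - (pd 0 v p + pd 1 w p) * pdd 0 1 w p + pd 0 w p * pdd 1 1 w p + pd 0 u p = 0) := by
  constructor
  · intro h p
    have su : pdd 3 1 u p = pdd 1 3 u p := pdd_symm u hu 3 1 p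
    have sv : pdd 3 1 v p = pdd 1 3 v p := pdd_symm v hv 3 1 p
    have sw : pdd 3 1 w p = pdd 1 3 w p := pdd_symm w hw 3 1 p
    have h0 := h p 0 0 0 0 0 0
    have h1 := h p 0 1 0 0 0 0
    have h2 := h p 0 0 1 0 0 0
    simp only [Etz, Ezt] at h0 h1 h2
    rw [su, sv, sw]
    refine ⟨by linear_combination h0, by linear_combination h1 - h0,
      by linear_combination h0 - h2⟩
  · intro h p q qx qy qxx qxy qyy
    obtain ⟨h1, h2, h3⟩ := h p
    rw [pdd_symm u hu 3 1 p] at h1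
    rw [pdd_symm v hv 3 1 p] at h2
    rw [pdd_symm w hw 3 1 p] at h3
    simp only [Etz, Ezt]
    linear_combination h1 + qx * h2 - qy * h3
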